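/- arXiv:2410.18404 — 8 statements merged into one kernel-verified Lean document; each statement's English description precedes it below -/
import Mathlib

section
/- Suppose M is c-CDP and for coordinate i the conditional distributions of the remaining coordinates satisfy TV(π_{x_{-i} | x_i ∈ S_i}, π_{x_{-i} | x_i ∈ S_i'}) ≤ q_i for all coordinate events S_i, S_i' of positive prior probability. Then (π, M) is δ-BCDP in coordinate i with δ_i = c_i + log(1 + q_i · e^{Σ_{j≠i} c_j} − q_i). -/
open Finset Real

private def extFun {d : ℕ} {Xc : Fin d → Type*} (i : Fin d)
    (z : (j : {j : Fin d // j ≠ i}) → Xc j) (t : Xc i) : ∀ j, Xc j :=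
  fun j => if h : j = i then cast (congrArg Xc h.symm) t else z ⟨j, h⟩

private lemma extFun_apply_i {d : ℕ} {Xc : Fin d → Type*} (i : Fin d)
    (z : (j : {j : Fin d // j ≠ i}) → Xc j) (t : Xc i) : extFun i z t i = t := by
  simp [extFun]

private lemma extFun_apply_ne {d : ℕ} {Xc : Fin d → Type*} (i : Fin d)
    (z : (j : {j : Fin d // j ≠ i}) → Xc j) (t : Xc i) (j : Fin d) (h : j ≠ i) :
    extFun i z t j = z ⟨j, h⟩ := dif_neg h

private lemma extFun_eq_self {d : ℕ} {Xc : Fin d → Type*} (i : Fin d)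
    (z : (j : {j : Fin d // j ≠ i}) → Xc j) (x : ∀ j, Xc j)
    (hz : ∀ j : {j : Fin d // j ≠ i}, x j = z j) : extFun i z (x i) = x := by
  funext j
  by_cases h : j = i
  · subst h; exact extFun_apply_i ..
  · rw [extFun_apply_ne i z _ j h]; exact (hz ⟨j, h⟩).symm

private lemma cdp_compose {d : ℕ} {Xc : Fin d → Type*} {Y : Type*} [Fintype Y]
    (μ : (∀ j, Xc j) → Y → ℝ) (c : Fin d → ℝ)
    (hCDP : ∀ (i : Fin d) (x x' : ∀ j, Xc j), (∀ j, j ≠ i → x j = x' j) →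
      ∀ R : Finset Y, ∑ y ∈ R, μ x y ≤ Real.exp (c i) * ∑ y ∈ R, μ x' y)
    (R : Finset Y) (T : Finset (Fin d)) :
    ∀ x x' : ∀ j, Xc j, (∀ j, j ∉ T → x j = x' j) →
      ∑ y ∈ R, μ x y ≤ Real.exp (∑ j ∈ T, c j) * ∑ y ∈ R, μ x' y := by
  classical
  induction T using Finset.induction_on with
  | empty =>
      intro x x' h
      have hxx : x = x' := funext fun j => h j (Finset.notMem_empty j)
      subst hxx
      simp
  | @insert a T ha ih =>
      intro x x' h
      set x'' := Function.update x a (x' a) with hx''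
      have h1 : ∑ y ∈ R, μ x y ≤ Real.exp (c a) * ∑ y ∈ R, μ x'' y := by
        refine hCDP a x x'' (fun j hj => ?_) R
        rw [hx'', Function.update_of_ne hj]
      have h2 : ∑ y ∈ R, μ x'' y ≤ Real.exp (∑ j ∈ T, c j) * ∑ y ∈ R, μ x' y := by
        refine ih x'' x' (fun j hj => ?_)
        by_cases hja : j = a
        · subst hja; simp [hx'']
        · rw [hx'', Function.update_of_ne hja]
          exact h j (by simp [hja, hj])
      calc ∑ y ∈ R, μ x y ≤ Real.exp (c a) * ∑ y ∈ R, μ x'' y := h1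
        _ ≤ Real.exp (c a) * (Real.exp (∑ j ∈ T, c j) * ∑ y ∈ R, μ x' y) :=
            mul_le_mul_of_nonneg_left h2 (Real.exp_nonneg _)
        _ = Real.exp (∑ j ∈ insert a T, c j) * ∑ y ∈ R, μ x' y := by
            rw [Finset.sum_insert ha, Real.exp_add, mul_assoc]

private lemma key_ineq {Z : Type*} [Fintype Z] (g ν ν' : Z → ℝ) (q m G C : ℝ)
    (hC0 : 0 ≤ C)
    (hν' : ∀ z, 0 ≤ ν' z)
    (hν1 : ∑ z, ν z = 1) (hν'1 : ∑ z, ν' z = 1)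
    (hm0 : 0 ≤ m) (hm : ∀ z, m ≤ g z) (hG : ∀ z, g z ≤ G)
    (hGm : G ≤ Real.exp C * m)
    (hq : 0 ≤ q)
    (hTV : (1/2) * ∑ z, |ν z - ν' z| ≤ q) :
    ∑ z, g z * ν z ≤ (1 + q * Real.exp C - q) * ∑ z, g z * ν' z := by
  have hZ : Nonempty Z := by
    by_contra hz
    rw [not_nonempty_iff] at hz
    rw [Finset.univ_eq_empty, Finset.sum_empty] at hν1
    norm_num at hν1
  have hmG : m ≤ G := le_trans (hm (Classical.arbitrary Z)) (hG (Classical.arbitrary Z))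
  have hmean : m ≤ ∑ z, g z * ν' z := by
    calc m = ∑ z, m * ν' z := by rw [← Finset.mul_sum, hν'1, mul_one]
      _ ≤ ∑ z, g z * ν' z :=
          Finset.sum_le_sum fun z _ => mul_le_mul_of_nonneg_right (hm z) (hν' z)
  have hdiff : ∑ z, g z * ν z - ∑ z, g z * ν' z ≤ q * (G - m) := by
    have e1 : ∑ z, g z * ν z - ∑ z, g z * ν' z
        = ∑ z, (g z - (m + G)/2) * (ν z - ν' z) := by
      have e2 : ∀ z, (g z - (m + G)/2) * (ν z - ν' z)
          = (g z * ν z - g z * ν' z - ((m + G)/2) * ν z) + ((m + G)/2) * ν' z :=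
        fun z => by ring
      simp only [e2, Finset.sum_add_distrib, Finset.sum_sub_distrib, ← Finset.mul_sum,
        hν1, hν'1]
      ring
    rw [e1]
    calc ∑ z, (g z - (m + G)/2) * (ν z - ν' z)
        ≤ ∑ z, ((G - m)/2) * |ν z - ν' z| := by
          refine Finset.sum_le_sum fun z _ => ?_
          have h1 : (g z - (m + G)/2) * (ν z - ν' z)
              ≤ |g z - (m + G)/2| * |ν z - ν' z| := by
            calc (g z - (m + G)/2) * (ν z - ν' z)
                ≤ |(g z - (m + G)/2) * (ν z - ν' z)| := le_abs_self _
              _ = |g z - (m + G)/2| * |ν z - ν' z| := abs_mul _ _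
          refine h1.trans (mul_le_mul_of_nonneg_right ?_ (abs_nonneg _))
          rw [abs_le]
          constructor
          · linarith [hm z]
          · linarith [hG z]
      _ = ((G - m)/2) * ∑ z, |ν z - ν' z| := by rw [Finset.mul_sum]
      _ ≤ ((G - m)/2) * (2 * q) := by
          refine mul_le_mul_of_nonneg_left (by linarith) (by linarith)
      _ = q * (G - m) := by ring
  have hbound : q * (G - m) ≤ q * (Real.exp C - 1) * m := by
    have h4 : G - m ≤ Real.exp C * m - m := by linarith
    calc q * (G - m) ≤ q * (Real.exp C * m - m) := mul_le_mul_of_nonneg_left h4 hq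
      _ = q * (Real.exp C - 1) * m := by ring
  have hcoef : 0 ≤ q * (Real.exp C - 1) :=
    mul_nonneg hq (by linarith [Real.one_le_exp hC0])
  have h5 : q * (Real.exp C - 1) * m ≤ q * (Real.exp C - 1) * (∑ z, g z * ν' z) :=
    mul_le_mul_of_nonneg_left hmean hcoef
  have hexp : (1 + q * Real.exp C - q) * ∑ z, g z * ν' z
      = (∑ z, g z * ν' z) + q * (Real.exp C - 1) * (∑ z, g z * ν' z) := by ring
  linarith

/-- **CDP to BCDP.** Suppose the mechanism `μ` is `c`-CDP and, for coordinate `i`,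
the conditional distributions of the remaining coordinates given `x_i ∈ Si` versus
`x_i ∈ Si'` are within total variation distance `qi`. Then `(p, μ)` is
`δᵢ`-BCDP in coordinate `i` with `δᵢ = cᵢ + log(1 + qᵢ e^{Σ_{j≠i} cⱼ} − qᵢ)`. -/
theorem cdp_to_bcdp {d : ℕ} {Xc : Fin d → Type*}
    [∀ j, Fintype (Xc j)] [∀ j, DecidableEq (Xc j)] {Y : Type*} [Fintype Y]
    (p : (∀ j, Xc j) → ℝ) (μ : (∀ j, Xc j) → Y → ℝ) (c : Fin d → ℝ)
    (hc : ∀ j, 0 ≤ c j)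
    (hp : ∀ x, 0 ≤ p x) (hp1 : ∑ x, p x = 1)
    (hμ : ∀ x y, 0 ≤ μ x y) (hμ1 : ∀ x, ∑ y, μ x y = 1)
    (hCDP : ∀ (i : Fin d) (x x' : ∀ j, Xc j), (∀ j, j ≠ i → x j = x' j) →
      ∀ R : Finset Y, ∑ y ∈ R, μ x y ≤ Real.exp (c i) * ∑ y ∈ R, μ x' y)
    (i : Fin d) (qi : ℝ)
    (hTV : ∀ Si Si' : Finset (Xc i),
      0 < ∑ x ∈ Finset.univ.filter (fun x : ∀ j, Xc j => x i ∈ Si), p x →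
      0 < ∑ x ∈ Finset.univ.filter (fun x : ∀ j, Xc j => x i ∈ Si'), p x →
      (1 / 2) * ∑ z : (j : {j : Fin d // j ≠ i}) → Xc j,
        |(∑ x ∈ Finset.univ.filter
              (fun x : ∀ j, Xc j => x i ∈ Si ∧ ∀ j : {j : Fin d // j ≠ i}, x j = z j), p x) /
            (∑ x ∈ Finset.univ.filter (fun x : ∀ j, Xc j => x i ∈ Si), p x)
          - (∑ x ∈ Finset.univ.filter
              (fun x : ∀ j, Xc j => x i ∈ Si' ∧ ∀ j : {j : Fin d // j ≠ i}, x j = z j), p x) /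
            (∑ x ∈ Finset.univ.filter (fun x : ∀ j, Xc j => x i ∈ Si'), p x)| ≤ qi) :
    ∀ (R : Finset Y) (Si Si' : Finset (Xc i)),
      0 < ∑ x ∈ Finset.univ.filter (fun x : ∀ j, Xc j => x i ∈ Si), p x →
      0 < ∑ x ∈ Finset.univ.filter (fun x : ∀ j, Xc j => x i ∈ Si'), p x →
      (∑ x ∈ Finset.univ.filter (fun x : ∀ j, Xc j => x i ∈ Si), p x * ∑ y ∈ R, μ x y) /
          (∑ x ∈ Finset.univ.filter (fun x : ∀ j, Xc j => x i ∈ Si), p x)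
        ≤ Real.exp (c i + Real.log (1 + qi * Real.exp (∑ j ∈ Finset.univ.erase i, c j) - qi)) *
          ((∑ x ∈ Finset.univ.filter (fun x : ∀ j, Xc j => x i ∈ Si'), p x * ∑ y ∈ R, μ x y) /
            (∑ x ∈ Finset.univ.filter (fun x : ∀ j, Xc j => x i ∈ Si'), p x)) := by
  classical
  intro R Si Si' hS hS'
  have hne : Nonempty (∀ j, Xc j) := by
    by_contra h
    rw [not_nonempty_iff] at h
    rw [Finset.univ_eq_empty, Finset.sum_empty] at hp1
    norm_num at hp1
  haveI : Nonempty (Xc i) := ⟨hne.some i⟩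
  haveI hZne : Nonempty ((j : {j : Fin d // j ≠ i}) → Xc j) := ⟨fun j => hne.some j⟩
  have hC0 : 0 ≤ ∑ j ∈ Finset.univ.erase i, c j := Finset.sum_nonneg fun j _ => hc j
  -- the pointwise minimal mechanism value over the i-th coordinate
  have hgex : ∃ g : ((j : {j : Fin d // j ≠ i}) → Xc j) → ℝ,
      (∀ z, 0 ≤ g z) ∧
      (∀ z t, g z ≤ ∑ y ∈ R, μ (extFun i z t) y) ∧
      (∀ z t, ∑ y ∈ R, μ (extFun i z t) y ≤ Real.exp (c i) * g z) ∧
      (∀ z z', g z ≤ Real.exp (∑ j ∈ Finset.univ.erase i, c j) * g z') := by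
    refine ⟨fun z => Finset.univ.inf' Finset.univ_nonempty
      (fun t : Xc i => ∑ y ∈ R, μ (extFun i z t) y), ?_, ?_, ?_, ?_⟩
    · exact fun z => Finset.le_inf' _ _ fun t _ => Finset.sum_nonneg fun y _ => hμ _ y
    · exact fun z t => Finset.inf'_le _ (Finset.mem_univ t)
    · intro z t
      obtain ⟨t₀, -, ht₀⟩ := Finset.exists_mem_eq_inf' (Finset.univ_nonempty (α := Xc i))
        (fun t : Xc i => ∑ y ∈ R, μ (extFun i z t) y)
      beta_reduce
      rw [ht₀]
      refine hCDP i (extFun i z t) (extFun i z t₀) (fun j hj => ?_) R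
      rw [extFun_apply_ne i z t j hj, extFun_apply_ne i z t₀ j hj]
    · intro z z'
      obtain ⟨t₀, -, ht₀⟩ := Finset.exists_mem_eq_inf' (Finset.univ_nonempty (α := Xc i))
        (fun t : Xc i => ∑ y ∈ R, μ (extFun i z' t) y)
      beta_reduce
      rw [ht₀]
      calc Finset.univ.inf' Finset.univ_nonempty
            (fun t : Xc i => ∑ y ∈ R, μ (extFun i z t) y)
          ≤ ∑ y ∈ R, μ (extFun i z t₀) y := Finset.inf'_le _ (Finset.mem_univ t₀)
        _ ≤ Real.exp (∑ j ∈ Finset.univ.erase i, c j) * ∑ y ∈ R, μ (extFun i z' t₀) y := by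
            refine cdp_compose μ c hCDP R _ _ _ (fun j hj => ?_)
            have hji : j = i := by simpa using hj
            subst hji
            rw [extFun_apply_i, extFun_apply_i]
  obtain ⟨g, hg0, hg_le, hg_up, hgC⟩ := hgex
  -- decomposition of sums into fibers over z
  have hfiber : ∀ (S : Finset (Xc i)) (F : (∀ j, Xc j) → ℝ),
      ∑ z : (j : {j : Fin d // j ≠ i}) → Xc j,
        ∑ x ∈ Finset.univ.filter
          (fun x : ∀ j, Xc j => x i ∈ S ∧ ∀ j : {j : Fin d // j ≠ i}, x j = z j), F x
      = ∑ x ∈ Finset.univ.filter (fun x : ∀ j, Xc j => x i ∈ S), F x := by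
    intro S F
    rw [← Finset.sum_fiberwise (Finset.univ.filter (fun x : ∀ j, Xc j => x i ∈ S))
      (fun x (j : {j : Fin d // j ≠ i}) => x j) F]
    refine Finset.sum_congr rfl fun z _ => ?_
    rw [Finset.filter_filter]
    refine Finset.sum_congr (Finset.filter_congr fun x _ => ?_) fun _ _ => rfl
    simp [funext_iff]
  -- q is nonnegative
  have hq0 : 0 ≤ qi := by simpa using hTV Si Si hS hS
  -- bounds between g and the fiberwise sums
  have h1 : ∑ x ∈ Finset.univ.filter (fun x : ∀ j, Xc j => x i ∈ Si), p x * ∑ y ∈ R, μ x y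
      ≤ Real.exp (c i) * ∑ z, g z * (∑ x ∈ Finset.univ.filter
          (fun x : ∀ j, Xc j => x i ∈ Si ∧ ∀ j : {j : Fin d // j ≠ i}, x j = z j), p x) := by
    rw [← hfiber Si (fun x => p x * ∑ y ∈ R, μ x y), Finset.mul_sum]
    refine Finset.sum_le_sum fun z _ => ?_
    rw [Finset.mul_sum, Finset.mul_sum]
    refine Finset.sum_le_sum fun x hx => ?_
    have hx' := (Finset.mem_filter.mp hx).2
    have hxe : extFun i z (x i) = x := extFun_eq_self i z x hx'.2
    calc p x * ∑ y ∈ R, μ x y = p x * ∑ y ∈ R, μ (extFun i z (x i)) y := by rw [hxe]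
      _ ≤ p x * (Real.exp (c i) * g z) := mul_le_mul_of_nonneg_left (hg_up z (x i)) (hp x)
      _ = Real.exp (c i) * (g z * p x) := by ring
  have h2 : ∑ z, g z * (∑ x ∈ Finset.univ.filter
        (fun x : ∀ j, Xc j => x i ∈ Si' ∧ ∀ j : {j : Fin d // j ≠ i}, x j = z j), p x)
      ≤ ∑ x ∈ Finset.univ.filter (fun x : ∀ j, Xc j => x i ∈ Si'), p x * ∑ y ∈ R, μ x y := by
    rw [← hfiber Si' (fun x => p x * ∑ y ∈ R, μ x y)]
    refine Finset.sum_le_sum fun z _ => ?_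
    rw [Finset.mul_sum]
    refine Finset.sum_le_sum fun x hx => ?_
    have hx' := (Finset.mem_filter.mp hx).2
    have hxe : extFun i z (x i) = x := extFun_eq_self i z x hx'.2
    calc g z * p x = p x * g z := by ring
      _ ≤ p x * ∑ y ∈ R, μ (extFun i z (x i)) y :=
          mul_le_mul_of_nonneg_left (hg_le z (x i)) (hp x)
      _ = p x * ∑ y ∈ R, μ x y := by rw [hxe]
  -- the conditional distributions of z
  have hν1 : ∑ z : (j : {j : Fin d // j ≠ i}) → Xc j,
      (∑ x ∈ Finset.univ.filter
          (fun x : ∀ j, Xc j => x i ∈ Si ∧ ∀ j : {j : Fin d // j ≠ i}, x j = z j), p x) /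
        (∑ x ∈ Finset.univ.filter (fun x : ∀ j, Xc j => x i ∈ Si), p x) = 1 := by
    rw [← Finset.sum_div, hfiber Si p, div_self hS.ne']
  have hν'1 : ∑ z : (j : {j : Fin d // j ≠ i}) → Xc j,
      (∑ x ∈ Finset.univ.filter
          (fun x : ∀ j, Xc j => x i ∈ Si' ∧ ∀ j : {j : Fin d // j ≠ i}, x j = z j), p x) /
        (∑ x ∈ Finset.univ.filter (fun x : ∀ j, Xc j => x i ∈ Si'), p x) = 1 := by
    rw [← Finset.sum_div, hfiber Si' p, div_self hS'.ne']
  -- extremal values of g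
  obtain ⟨m, G, hm0, hm_le, hG_ge, hGm⟩ :
      ∃ m G : ℝ, 0 ≤ m ∧ (∀ z, m ≤ g z) ∧ (∀ z, g z ≤ G) ∧
        G ≤ Real.exp (∑ j ∈ Finset.univ.erase i, c j) * m := by
    refine ⟨Finset.univ.inf' Finset.univ_nonempty g, Finset.univ.sup' Finset.univ_nonempty g,
      Finset.le_inf' _ _ fun z _ => hg0 z,
      fun z => Finset.inf'_le _ (Finset.mem_univ z),
      fun z => Finset.le_sup' _ (Finset.mem_univ z), ?_⟩
    obtain ⟨z₁, -, hz₁⟩ := Finset.exists_mem_eq_sup' (Finset.univ_nonempty) g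
    obtain ⟨z₀, -, hz₀⟩ := Finset.exists_mem_eq_inf' (Finset.univ_nonempty) g
    rw [hz₁, hz₀]
    exact hgC z₁ z₀
  -- the key TV-based inequality
  have hkey := key_ineq g
    (fun z => (∑ x ∈ Finset.univ.filter
        (fun x : ∀ j, Xc j => x i ∈ Si ∧ ∀ j : {j : Fin d // j ≠ i}, x j = z j), p x) /
      (∑ x ∈ Finset.univ.filter (fun x : ∀ j, Xc j => x i ∈ Si), p x))
    (fun z => (∑ x ∈ Finset.univ.filter
        (fun x : ∀ j, Xc j => x i ∈ Si' ∧ ∀ j : {j : Fin d // j ≠ i}, x j = z j), p x) /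
      (∑ x ∈ Finset.univ.filter (fun x : ∀ j, Xc j => x i ∈ Si'), p x))
    qi m G (∑ j ∈ Finset.univ.erase i, c j) hC0
    (fun z => div_nonneg (Finset.sum_nonneg fun x _ => hp x) hS'.le)
    hν1 hν'1 hm0 hm_le hG_ge hGm hq0 (hTV Si Si' hS hS')
  -- positivity of the log argument
  have hK : (0:ℝ) < 1 + qi * Real.exp (∑ j ∈ Finset.univ.erase i, c j) - qi := by
    have h6 := mul_nonneg hq0 (sub_nonneg.mpr (Real.one_le_exp hC0))
    nlinarith
  rw [Real.exp_add, Real.exp_log hK]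
  have hL : (∑ x ∈ Finset.univ.filter (fun x : ∀ j, Xc j => x i ∈ Si), p x * ∑ y ∈ R, μ x y) /
        (∑ x ∈ Finset.univ.filter (fun x : ∀ j, Xc j => x i ∈ Si), p x)
      ≤ Real.exp (c i) * ∑ z, g z * ((∑ x ∈ Finset.univ.filter
          (fun x : ∀ j, Xc j => x i ∈ Si ∧ ∀ j : {j : Fin d // j ≠ i}, x j = z j), p x) /
        (∑ x ∈ Finset.univ.filter (fun x : ∀ j, Xc j => x i ∈ Si), p x)) := by
    calc (∑ x ∈ Finset.univ.filter (fun x : ∀ j, Xc j => x i ∈ Si), p x * ∑ y ∈ R, μ x y) /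
          (∑ x ∈ Finset.univ.filter (fun x : ∀ j, Xc j => x i ∈ Si), p x)
        ≤ (Real.exp (c i) * ∑ z, g z * (∑ x ∈ Finset.univ.filter
            (fun x : ∀ j, Xc j => x i ∈ Si ∧ ∀ j : {j : Fin d // j ≠ i}, x j = z j), p x)) /
          (∑ x ∈ Finset.univ.filter (fun x : ∀ j, Xc j => x i ∈ Si), p x) := by
          gcongr
      _ = Real.exp (c i) * ∑ z, g z * ((∑ x ∈ Finset.univ.filter
            (fun x : ∀ j, Xc j => x i ∈ Si ∧ ∀ j : {j : Fin d // j ≠ i}, x j = z j), p x) /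
          (∑ x ∈ Finset.univ.filter (fun x : ∀ j, Xc j => x i ∈ Si), p x)) := by
          rw [mul_div_assoc, Finset.sum_div]
          congr 1
          exact Finset.sum_congr rfl fun z _ => mul_div_assoc _ _ _
  have hR : ∑ z, g z * ((∑ x ∈ Finset.univ.filter
          (fun x : ∀ j, Xc j => x i ∈ Si' ∧ ∀ j : {j : Fin d // j ≠ i}, x j = z j), p x) /
        (∑ x ∈ Finset.univ.filter (fun x : ∀ j, Xc j => x i ∈ Si'), p x))
      ≤ (∑ x ∈ Finset.univ.filter (fun x : ∀ j, Xc j => x i ∈ Si'), p x * ∑ y ∈ R, μ x y) /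
        (∑ x ∈ Finset.univ.filter (fun x : ∀ j, Xc j => x i ∈ Si'), p x) := by
    calc ∑ z, g z * ((∑ x ∈ Finset.univ.filter
            (fun x : ∀ j, Xc j => x i ∈ Si' ∧ ∀ j : {j : Fin d // j ≠ i}, x j = z j), p x) /
          (∑ x ∈ Finset.univ.filter (fun x : ∀ j, Xc j => x i ∈ Si'), p x))
        = (∑ z, g z * (∑ x ∈ Finset.univ.filter
            (fun x : ∀ j, Xc j => x i ∈ Si' ∧ ∀ j : {j : Fin d // j ≠ i}, x j = z j), p x)) /
          (∑ x ∈ Finset.univ.filter (fun x : ∀ j, Xc j => x i ∈ Si'), p x) := by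
          rw [Finset.sum_div]
          exact Finset.sum_congr rfl fun z _ => (mul_div_assoc _ _ _).symm
      _ ≤ (∑ x ∈ Finset.univ.filter (fun x : ∀ j, Xc j => x i ∈ Si'), p x * ∑ y ∈ R, μ x y) /
          (∑ x ∈ Finset.univ.filter (fun x : ∀ j, Xc j => x i ∈ Si'), p x) := by
          gcongr
  calc (∑ x ∈ Finset.univ.filter (fun x : ∀ j, Xc j => x i ∈ Si), p x * ∑ y ∈ R, μ x y) /
        (∑ x ∈ Finset.univ.filter (fun x : ∀ j, Xc j => x i ∈ Si), p x)
      ≤ Real.exp (c i) * ∑ z, g z * ((∑ x ∈ Finset.univ.filter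
          (fun x : ∀ j, Xc j => x i ∈ Si ∧ ∀ j : {j : Fin d // j ≠ i}, x j = z j), p x) /
        (∑ x ∈ Finset.univ.filter (fun x : ∀ j, Xc j => x i ∈ Si), p x)) := hL
    _ ≤ Real.exp (c i) * ((1 + qi * Real.exp (∑ j ∈ Finset.univ.erase i, c j) - qi) *
        ∑ z, g z * ((∑ x ∈ Finset.univ.filter
          (fun x : ∀ j, Xc j => x i ∈ Si' ∧ ∀ j : {j : Fin d // j ≠ i}, x j = z j), p x) /
        (∑ x ∈ Finset.univ.filter (fun x : ∀ j, Xc j => x i ∈ Si'), p x))) :=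
        mul_le_mul_of_nonneg_left hkey (Real.exp_nonneg _)
    _ ≤ Real.exp (c i) * ((1 + qi * Real.exp (∑ j ∈ Finset.univ.erase i, c j) - qi) *
        ((∑ x ∈ Finset.univ.filter (fun x : ∀ j, Xc j => x i ∈ Si'), p x * ∑ y ∈ R, μ x y) /
          (∑ x ∈ Finset.univ.filter (fun x : ∀ j, Xc j => x i ∈ Si'), p x))) :=
        mul_le_mul_of_nonneg_left (mul_le_mul_of_nonneg_left hR hK.le) (Real.exp_nonneg _)
    _ = Real.exp (c i) * (1 + qi * Real.exp (∑ j ∈ Finset.univ.erase i, c j) - qi) *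
        ((∑ x ∈ Finset.univ.filter (fun x : ∀ j, Xc j => x i ∈ Si'), p x * ∑ y ∈ R, μ x y) /
          (∑ x ∈ Finset.univ.filter (fun x : ∀ j, Xc j => x i ∈ Si'), p x)) := by ring
end

section
/- Suppose M is c-CDP and additionally ε-LDP, and for coordinate i the conditional distributions satisfy TV(π_{x_{-i} | x_i ∈ S_i}, π_{x_{-i} | x_i ∈ S_i'}) ≤ q_i for all coordinate events S_i, S_i' of positive prior probability. Then (π, M) is δ'-BCDP in coordinate i with δ'_i = min{c_i + log(1 + q_i e^{ε} − q_i), ε}. -/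
open Finset Real

lemma bcdp_core {Z : Type*} [Fintype Z] [Nonempty Z] (u v g : Z → ℝ) (q eps : ℝ)
    (hv0 : ∀ z, 0 ≤ v z) (hu1 : ∑ z, u z = 1) (hv1 : ∑ z, v z = 1)
    (hg0 : ∀ z, 0 ≤ g z) (heps : 1 ≤ eps)
    (hge : ∀ z z', g z ≤ eps * g z')
    (hq : (1/2) * ∑ z, |u z - v z| ≤ q) :
    ∑ z, u z * g z ≤ (1 + q * eps - q) * ∑ z, v z * g z := by
  have hZne : (Finset.univ : Finset Z).Nonempty := Finset.univ_nonempty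
  obtain ⟨z0, -, hz0⟩ := Finset.exists_mem_eq_inf' hZne g
  set m : ℝ := Finset.univ.inf' hZne g with hm
  have hm0 : 0 ≤ m := Finset.le_inf' hZne _ fun z _ => hg0 z
  have hmle : ∀ z, m ≤ g z := fun z => Finset.inf'_le _ (Finset.mem_univ z)
  have hq0 : 0 ≤ q := le_trans (by positivity) hq
  have hgm : ∀ z, g z ≤ eps * m := by
    intro z
    rw [hz0]; exact hge z z0
  set G : ℝ := ∑ z : Z, v z * g z with hG
  have hmG : m ≤ G := by
    calc m = ∑ z : Z, v z * m := by rw [← Finset.sum_mul, hv1, one_mul]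
      _ ≤ G := Finset.sum_le_sum fun z _ => mul_le_mul_of_nonneg_left (hmle z) (hv0 z)
  have hG0 : 0 ≤ G := le_trans hm0 hmG
  set t : ℝ := ∑ z : Z, max (u z - v z) 0 with ht
  set s : ℝ := ∑ z : Z, max (v z - u z) 0 with hs
  have hts : t - s = 0 := by
    rw [ht, hs, ← Finset.sum_sub_distrib]
    have hpt : ∀ z : Z, max (u z - v z) 0 - max (v z - u z) 0 = u z - v z := by
      intro z
      rcases le_total (u z) (v z) with h | h
      · rw [max_eq_right (by linarith), max_eq_left (by linarith)]; ring
      · rw [max_eq_left (by linarith), max_eq_right (by linarith)]; ring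
    rw [Finset.sum_congr rfl fun z _ => hpt z, Finset.sum_sub_distrib, hu1, hv1, sub_self]
  have htabs : t + s = ∑ z : Z, |u z - v z| := by
    rw [ht, hs, ← Finset.sum_add_distrib]
    refine Finset.sum_congr rfl fun z _ => ?_
    rcases le_total (u z) (v z) with h | h
    · rw [max_eq_right (by linarith), max_eq_left (by linarith),
        abs_of_nonpos (by linarith)]; ring
    · rw [max_eq_left (by linarith), max_eq_right (by linarith),
        abs_of_nonneg (by linarith)]; ring
  have htq : t ≤ q := by
    have : t = (1 / 2) * ∑ z : Z, |u z - v z| := by rw [← htabs]; linarith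
    rw [this]; exact hq
  have ht0 : 0 ≤ t := Finset.sum_nonneg fun z _ => le_max_right _ _
  have hptwise : ∀ z : Z, (u z - v z) * g z
      ≤ max (u z - v z) 0 * (eps * m) - max (v z - u z) 0 * m := by
    intro z
    rcases le_total (u z) (v z) with h | h
    · rw [max_eq_right (by linarith), max_eq_left (by linarith), zero_mul, zero_sub]
      have := mul_le_mul_of_nonneg_left (hmle z) (show 0 ≤ v z - u z by linarith)
      linarith
    · rw [max_eq_left (by linarith), max_eq_right (by linarith), zero_mul, sub_zero]
      exact mul_le_mul_of_nonneg_left (hgm z) (by linarith)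
  have hsum : ∑ z : Z, (u z - v z) * g z ≤ t * (eps * m) - s * m := by
    rw [ht, hs, Finset.sum_mul, Finset.sum_mul, ← Finset.sum_sub_distrib]
    exact Finset.sum_le_sum fun z _ => hptwise z
  have hst : s = t := by linarith
  have h4 : t * (eps - 1) * m ≤ q * (eps - 1) * m := by
    have := mul_le_mul_of_nonneg_right htq (show 0 ≤ eps - 1 by linarith)
    exact mul_le_mul_of_nonneg_right this hm0
  have h5 : q * (eps - 1) * m ≤ q * (eps - 1) * G :=
    mul_le_mul_of_nonneg_left hmG (by nlinarith)
  have h7 : ∑ z : Z, u z * g z - G = ∑ z : Z, (u z - v z) * g z := by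
    rw [hG, ← Finset.sum_sub_distrib]
    exact Finset.sum_congr rfl fun z _ => by ring
  nlinarith [hsum, h4, h5, h7, hst]

/-- **CDP + LDP to BCDP.** Suppose the mechanism `μ` is `c`-CDP and `ε`-LDP and, for coordinate `i`,
the conditional distributions of the remaining coordinates given `x_i ∈ Si` versus
`x_i ∈ Si'` are within total variation distance `qi`. Then `(p, μ)` is
`δ'ᵢ`-BCDP in coordinate `i` with `δ'ᵢ = min{cᵢ + log(1 + qᵢ e^ε − qᵢ), ε}`. -/
theorem cdp_ldp_to_bcdp {d : ℕ} {Xc : Fin d → Type*}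
    [∀ j, Fintype (Xc j)] [∀ j, DecidableEq (Xc j)] {Y : Type*} [Fintype Y]
    (p : (∀ j, Xc j) → ℝ) (μ : (∀ j, Xc j) → Y → ℝ) (c : Fin d → ℝ)
    (hc : ∀ j, 0 ≤ c j)
    (hp : ∀ x, 0 ≤ p x) (hp1 : ∑ x, p x = 1)
    (hμ : ∀ x y, 0 ≤ μ x y) (hμ1 : ∀ x, ∑ y, μ x y = 1)
    (hCDP : ∀ (i : Fin d) (x x' : ∀ j, Xc j), (∀ j, j ≠ i → x j = x' j) →
      ∀ R : Finset Y, ∑ y ∈ R, μ x y ≤ Real.exp (c i) * ∑ y ∈ R, μ x' y)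
    (ε : ℝ)
    (hLDP : ∀ x x' : (∀ j, Xc j), ∀ R : Finset Y,
      ∑ y ∈ R, μ x y ≤ Real.exp ε * ∑ y ∈ R, μ x' y)
    (i : Fin d) (qi : ℝ)
    (hTV : ∀ Si Si' : Finset (Xc i),
      0 < ∑ x ∈ Finset.univ.filter (fun x : ∀ j, Xc j => x i ∈ Si), p x →
      0 < ∑ x ∈ Finset.univ.filter (fun x : ∀ j, Xc j => x i ∈ Si'), p x →
      (1 / 2) * ∑ z : (j : {j : Fin d // j ≠ i}) → Xc j,
        |(∑ x ∈ Finset.univ.filter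
              (fun x : ∀ j, Xc j => x i ∈ Si ∧ ∀ j : {j : Fin d // j ≠ i}, x j = z j), p x) /
            (∑ x ∈ Finset.univ.filter (fun x : ∀ j, Xc j => x i ∈ Si), p x)
          - (∑ x ∈ Finset.univ.filter
              (fun x : ∀ j, Xc j => x i ∈ Si' ∧ ∀ j : {j : Fin d // j ≠ i}, x j = z j), p x) /
            (∑ x ∈ Finset.univ.filter (fun x : ∀ j, Xc j => x i ∈ Si'), p x)| ≤ qi) :
    ∀ (R : Finset Y) (Si Si' : Finset (Xc i)),
      0 < ∑ x ∈ Finset.univ.filter (fun x : ∀ j, Xc j => x i ∈ Si), p x →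
      0 < ∑ x ∈ Finset.univ.filter (fun x : ∀ j, Xc j => x i ∈ Si'), p x →
      (∑ x ∈ Finset.univ.filter (fun x : ∀ j, Xc j => x i ∈ Si), p x * ∑ y ∈ R, μ x y) /
          (∑ x ∈ Finset.univ.filter (fun x : ∀ j, Xc j => x i ∈ Si), p x)
        ≤ Real.exp (min (c i + Real.log (1 + qi * Real.exp ε - qi)) ε) *
          ((∑ x ∈ Finset.univ.filter (fun x : ∀ j, Xc j => x i ∈ Si'), p x * ∑ y ∈ R, μ x y) /
            (∑ x ∈ Finset.univ.filter (fun x : ∀ j, Xc j => x i ∈ Si'), p x)) := by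
  classical
  intro R Si Si' h1 h2
  obtain ⟨x0, hx0mem⟩ := Finset.nonempty_of_sum_ne_zero (ne_of_gt h1)
  -- basic positivity facts
  have hexpε : (1:ℝ) ≤ Real.exp ε := by
    have h := hLDP x0 x0 Finset.univ
    rwa [hμ1, mul_one] at h
  have hq : 0 ≤ qi := by
    have h := hTV Si Si h1 h1
    simpa using h
  have hfac : (1:ℝ) ≤ 1 + qi * Real.exp ε - qi := by nlinarith
  have hfacpos : (0:ℝ) < 1 + qi * Real.exp ε - qi := lt_of_lt_of_le one_pos hfac
  -- coordinate machinery
  let restr : (∀ j, Xc j) → ((j : {j : Fin d // j ≠ i}) → Xc j) := fun x j => x j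
  let base : ((j : {j : Fin d // j ≠ i}) → Xc j) → ∀ j, Xc j :=
    fun z j => if h : j ≠ i then z ⟨j, h⟩ else x0 j
  let emb : ((j : {j : Fin d // j ≠ i}) → Xc j) → Xc i → ∀ j, Xc j :=
    fun z a => Function.update (base z) i a
  have hembi : ∀ z a, emb z a i = a := fun z a => Function.update_self i a (base z)
  have hembne : ∀ z a (j : Fin d) (h : j ≠ i), emb z a j = z ⟨j, h⟩ := by
    intro z a j h
    show Function.update (base z) i a j = z ⟨j, h⟩
    rw [Function.update_of_ne h]
    show (if h' : j ≠ i then z ⟨j, h'⟩ else x0 j) = z ⟨j, h⟩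
    rw [dif_pos h]
  have hembx : ∀ x : ∀ j, Xc j, emb (restr x) (x i) = x := by
    intro x; funext j
    by_cases h : j = i
    · subst h; exact hembi _ _
    · rw [hembne _ _ _ h]
  have hXi : (Finset.univ : Finset (Xc i)).Nonempty := ⟨x0 i, Finset.mem_univ _⟩
  -- the minimum-over-coordinate-i function
  let g : ((j : {j : Fin d // j ≠ i}) → Xc j) → ℝ :=
    fun z => Finset.univ.inf' hXi (fun a => ∑ y ∈ R, μ (emb z a) y)
  have hg0 : ∀ z, 0 ≤ g z := fun z =>
    Finset.le_inf' hXi _ (fun a _ => Finset.sum_nonneg fun y _ => hμ _ _)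
  have hCDPg : ∀ (x) (z), restr x = z → ∑ y ∈ R, μ x y ≤ Real.exp (c i) * g z := by
    intro x z hz
    obtain ⟨a0, -, ha0⟩ := Finset.exists_mem_eq_inf' hXi (fun a => ∑ y ∈ R, μ (emb z a) y)
    have hgz : g z = ∑ y ∈ R, μ (emb z a0) y := ha0
    rw [hgz]
    exact hCDP i x (emb z a0) (fun j hj => by rw [hembne z a0 j hj, ← hz]) R
  have hge : ∀ (x) (z), restr x = z → g z ≤ ∑ y ∈ R, μ x y := by
    intro x z hz
    have h := Finset.inf'_le (fun a => ∑ y ∈ R, μ (emb z a) y) (Finset.mem_univ (x i))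
    have hx : emb z (x i) = x := by rw [← hz]; exact hembx x
    calc g z ≤ ∑ y ∈ R, μ (emb z (x i)) y := h
      _ = ∑ y ∈ R, μ x y := by rw [hx]
  have hgε : ∀ z z', g z ≤ Real.exp ε * g z' := by
    intro z z'
    obtain ⟨a0, -, ha0⟩ := Finset.exists_mem_eq_inf' hXi (fun a => ∑ y ∈ R, μ (emb z' a) y)
    have hgz : g z' = ∑ y ∈ R, μ (emb z' a0) y := ha0
    rw [hgz]
    calc g z ≤ ∑ y ∈ R, μ (emb z a0) y :=
          Finset.inf'_le _ (Finset.mem_univ a0)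
      _ ≤ Real.exp ε * ∑ y ∈ R, μ (emb z' a0) y := hLDP _ _ R
  -- fiberwise decomposition
  have hpart : ∀ (S : Finset (Xc i)) (f : (∀ j, Xc j) → ℝ),
      ∑ x ∈ Finset.univ.filter (fun x => x i ∈ S), f x
        = ∑ z : (j : {j : Fin d // j ≠ i}) → Xc j,
            ∑ x ∈ Finset.univ.filter (fun x => x i ∈ S ∧ restr x = z), f x := by
    intro S f
    calc ∑ x ∈ Finset.univ.filter (fun x => x i ∈ S), f x
        = ∑ x ∈ (Finset.univ.filter (fun x => x i ∈ S)).filter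
            (fun x => restr x ∈ (Finset.univ : Finset ((j : {j : Fin d // j ≠ i}) → Xc j))),
            f x := by
          rw [Finset.filter_true_of_mem (fun x _ => Finset.mem_univ (restr x))]
      _ = ∑ z : (j : {j : Fin d // j ≠ i}) → Xc j,
            ∑ x ∈ (Finset.univ.filter (fun x => x i ∈ S)).filter (fun x => restr x = z), f x :=
          (Finset.sum_fiberwise_eq_sum_filter _ _ _ _).symm
      _ = ∑ z : (j : {j : Fin d // j ≠ i}) → Xc j,
            ∑ x ∈ Finset.univ.filter (fun x => x i ∈ S ∧ restr x = z), f x := by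
          refine Finset.sum_congr rfl fun z _ => ?_
          rw [Finset.filter_filter]
  have hfiltcongr : ∀ (S : Finset (Xc i)) (z : (j : {j : Fin d // j ≠ i}) → Xc j),
      Finset.univ.filter (fun x : ∀ j, Xc j => x i ∈ S ∧ ∀ j : {j : Fin d // j ≠ i}, x j = z j)
        = Finset.univ.filter (fun x : ∀ j, Xc j => x i ∈ S ∧ restr x = z) := by
    intro S z
    refine Finset.filter_congr fun x _ => ?_
    simp only [funext_iff, restr]
  -- normalized fiber weights
  set u : ((j : {j : Fin d // j ≠ i}) → Xc j) → ℝ := fun z =>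
    (∑ x ∈ Finset.univ.filter (fun x => x i ∈ Si ∧ restr x = z), p x) /
      (∑ x ∈ Finset.univ.filter (fun x : ∀ j, Xc j => x i ∈ Si), p x) with hu
  set v : ((j : {j : Fin d // j ≠ i}) → Xc j) → ℝ := fun z =>
    (∑ x ∈ Finset.univ.filter (fun x => x i ∈ Si' ∧ restr x = z), p x) /
      (∑ x ∈ Finset.univ.filter (fun x : ∀ j, Xc j => x i ∈ Si'), p x) with hv
  have hu0 : ∀ z, 0 ≤ u z := fun z =>
    div_nonneg (Finset.sum_nonneg fun x _ => hp x) h1.le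
  have hv0 : ∀ z, 0 ≤ v z := fun z =>
    div_nonneg (Finset.sum_nonneg fun x _ => hp x) h2.le
  have hu1 : ∑ z, u z = 1 := by
    rw [hu]
    simp only [← Finset.sum_div]
    rw [← hpart Si p]
    exact div_self (ne_of_gt h1)
  have hv1 : ∑ z, v z = 1 := by
    rw [hv]
    simp only [← Finset.sum_div]
    rw [← hpart Si' p]
    exact div_self (ne_of_gt h2)
  have hTVuv : (1 / 2) * ∑ z, |u z - v z| ≤ qi := by
    have h := hTV Si Si' h1 h2
    have heq : ∀ z : (j : {j : Fin d // j ≠ i}) → Xc j,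
        |(∑ x ∈ Finset.univ.filter
              (fun x : ∀ j, Xc j => x i ∈ Si ∧ ∀ j : {j : Fin d // j ≠ i}, x j = z j), p x) /
            (∑ x ∈ Finset.univ.filter (fun x : ∀ j, Xc j => x i ∈ Si), p x)
          - (∑ x ∈ Finset.univ.filter
              (fun x : ∀ j, Xc j => x i ∈ Si' ∧ ∀ j : {j : Fin d // j ≠ i}, x j = z j), p x) /
            (∑ x ∈ Finset.univ.filter (fun x : ∀ j, Xc j => x i ∈ Si'), p x)|
          = |u z - v z| := by
      intro z
      rw [hfiltcongr Si z, hfiltcongr Si' z]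
    rwa [Finset.sum_congr rfl fun z _ => heq z] at h
  haveI : Nonempty ((j : {j : Fin d // j ≠ i}) → Xc j) := ⟨restr x0⟩
  have hkey : ∑ z, u z * g z ≤ (1 + qi * Real.exp ε - qi) * ∑ z, v z * g z :=
    bcdp_core u v g qi (Real.exp ε) hv0 hu1 hv1 hg0 hexpε hgε hTVuv
  -- relate fiber sums to the posterior numerators
  have hNup : ∑ x ∈ Finset.univ.filter (fun x : ∀ j, Xc j => x i ∈ Si), p x * ∑ y ∈ R, μ x y
      ≤ Real.exp (c i) * ((∑ x ∈ Finset.univ.filter (fun x : ∀ j, Xc j => x i ∈ Si), p x)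
          * ∑ z, u z * g z) := by
    rw [hpart Si (fun x => p x * ∑ y ∈ R, μ x y)]
    rw [Finset.mul_sum, Finset.mul_sum]
    refine Finset.sum_le_sum fun z _ => ?_
    calc ∑ x ∈ Finset.univ.filter (fun x => x i ∈ Si ∧ restr x = z), p x * ∑ y ∈ R, μ x y
        ≤ ∑ x ∈ Finset.univ.filter (fun x => x i ∈ Si ∧ restr x = z),
            p x * (Real.exp (c i) * g z) := by
          refine Finset.sum_le_sum fun x hx => ?_
          exact mul_le_mul_of_nonneg_left (hCDPg x z (Finset.mem_filter.mp hx).2.2) (hp x)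
      _ = Real.exp (c i)
          * ((∑ x ∈ Finset.univ.filter (fun x : ∀ j, Xc j => x i ∈ Si), p x) * (u z * g z)) := by
          rw [← Finset.sum_mul, hu]
          have hane : (∑ x ∈ Finset.univ.filter (fun x : ∀ j, Xc j => x i ∈ Si), p x) ≠ 0 :=
            ne_of_gt h1
          field_simp
  have hNdown : (∑ x ∈ Finset.univ.filter (fun x : ∀ j, Xc j => x i ∈ Si'), p x)
        * ∑ z, v z * g z
      ≤ ∑ x ∈ Finset.univ.filter (fun x : ∀ j, Xc j => x i ∈ Si'), p x * ∑ y ∈ R, μ x y := by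
    rw [hpart Si' (fun x => p x * ∑ y ∈ R, μ x y), Finset.mul_sum]
    refine Finset.sum_le_sum fun z _ => ?_
    calc (∑ x ∈ Finset.univ.filter (fun x : ∀ j, Xc j => x i ∈ Si'), p x) * (v z * g z)
        = ∑ x ∈ Finset.univ.filter (fun x => x i ∈ Si' ∧ restr x = z), p x * g z := by
          simp only [hv]
          rw [← Finset.sum_mul]
          have hane : (∑ x ∈ Finset.univ.filter (fun x : ∀ j, Xc j => x i ∈ Si'), p x) ≠ 0 :=
            ne_of_gt h2
          field_simp
      _ ≤ ∑ x ∈ Finset.univ.filter (fun x => x i ∈ Si' ∧ restr x = z), p x * ∑ y ∈ R, μ x y :=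
          Finset.sum_le_sum fun x hx =>
            mul_le_mul_of_nonneg_left (hge x z (Finset.mem_filter.mp hx).2.2) (hp x)
  -- bound 1 : CDP + TV
  have bound1 : (∑ x ∈ Finset.univ.filter (fun x : ∀ j, Xc j => x i ∈ Si),
          p x * ∑ y ∈ R, μ x y) /
        (∑ x ∈ Finset.univ.filter (fun x : ∀ j, Xc j => x i ∈ Si), p x)
      ≤ Real.exp (c i + Real.log (1 + qi * Real.exp ε - qi)) *
        ((∑ x ∈ Finset.univ.filter (fun x : ∀ j, Xc j => x i ∈ Si'),
            p x * ∑ y ∈ R, μ x y) /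
          (∑ x ∈ Finset.univ.filter (fun x : ∀ j, Xc j => x i ∈ Si'), p x)) := by
    rw [div_le_iff₀ h1, Real.exp_add, Real.exp_log hfacpos]
    calc ∑ x ∈ Finset.univ.filter (fun x : ∀ j, Xc j => x i ∈ Si), p x * ∑ y ∈ R, μ x y
        ≤ Real.exp (c i) * ((∑ x ∈ Finset.univ.filter (fun x : ∀ j, Xc j => x i ∈ Si), p x)
            * ∑ z, u z * g z) := hNup
      _ ≤ Real.exp (c i) * ((∑ x ∈ Finset.univ.filter (fun x : ∀ j, Xc j => x i ∈ Si), p x)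
            * ((1 + qi * Real.exp ε - qi) * ∑ z, v z * g z)) := by
          refine mul_le_mul_of_nonneg_left (mul_le_mul_of_nonneg_left hkey h1.le)
            (Real.exp_pos _).le
      _ ≤ Real.exp (c i) * ((∑ x ∈ Finset.univ.filter (fun x : ∀ j, Xc j => x i ∈ Si), p x)
            * ((1 + qi * Real.exp ε - qi) *
              ((∑ x ∈ Finset.univ.filter (fun x : ∀ j, Xc j => x i ∈ Si'),
                  p x * ∑ y ∈ R, μ x y) /
                (∑ x ∈ Finset.univ.filter (fun x : ∀ j, Xc j => x i ∈ Si'), p x)))) := by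
          refine mul_le_mul_of_nonneg_left (mul_le_mul_of_nonneg_left
            (mul_le_mul_of_nonneg_left ?_ hfacpos.le) h1.le) (Real.exp_pos _).le
          rw [le_div_iff₀ h2]
          calc (∑ z, v z * g z)
                * (∑ x ∈ Finset.univ.filter (fun x : ∀ j, Xc j => x i ∈ Si'), p x)
              = (∑ x ∈ Finset.univ.filter (fun x : ∀ j, Xc j => x i ∈ Si'), p x)
                * ∑ z, v z * g z := by ring
            _ ≤ _ := hNdown
      _ = Real.exp (c i) * (1 + qi * Real.exp ε - qi) *
            ((∑ x ∈ Finset.univ.filter (fun x : ∀ j, Xc j => x i ∈ Si'),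
                p x * ∑ y ∈ R, μ x y) /
              (∑ x ∈ Finset.univ.filter (fun x : ∀ j, Xc j => x i ∈ Si'), p x)) *
            (∑ x ∈ Finset.univ.filter (fun x : ∀ j, Xc j => x i ∈ Si), p x) := by ring
  -- bound 2 : LDP
  have bound2 : (∑ x ∈ Finset.univ.filter (fun x : ∀ j, Xc j => x i ∈ Si),
          p x * ∑ y ∈ R, μ x y) /
        (∑ x ∈ Finset.univ.filter (fun x : ∀ j, Xc j => x i ∈ Si), p x)
      ≤ Real.exp ε *
        ((∑ x ∈ Finset.univ.filter (fun x : ∀ j, Xc j => x i ∈ Si'),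
            p x * ∑ y ∈ R, μ x y) /
          (∑ x ∈ Finset.univ.filter (fun x : ∀ j, Xc j => x i ∈ Si'), p x)) := by
    have hμbd : ∀ x : ∀ j, Xc j, ∑ y ∈ R, μ x y
        ≤ Real.exp ε *
          ((∑ x ∈ Finset.univ.filter (fun x : ∀ j, Xc j => x i ∈ Si'),
              p x * ∑ y ∈ R, μ x y) /
            (∑ x ∈ Finset.univ.filter (fun x : ∀ j, Xc j => x i ∈ Si'), p x)) := by
      intro x
      rw [← mul_div_assoc, le_div_iff₀ h2, Finset.mul_sum, Finset.mul_sum]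
      refine Finset.sum_le_sum fun x' _ => ?_
      calc (∑ y ∈ R, μ x y) * p x' = p x' * ∑ y ∈ R, μ x y := by ring
        _ ≤ p x' * (Real.exp ε * ∑ y ∈ R, μ x' y) :=
            mul_le_mul_of_nonneg_left (hLDP x x' R) (hp x')
        _ = Real.exp ε * (p x' * ∑ y ∈ R, μ x' y) := by ring
    rw [div_le_iff₀ h1]
    calc ∑ x ∈ Finset.univ.filter (fun x : ∀ j, Xc j => x i ∈ Si), p x * ∑ y ∈ R, μ x y
        ≤ ∑ x ∈ Finset.univ.filter (fun x : ∀ j, Xc j => x i ∈ Si),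
            p x * (Real.exp ε *
              ((∑ x ∈ Finset.univ.filter (fun x : ∀ j, Xc j => x i ∈ Si'),
                  p x * ∑ y ∈ R, μ x y) /
                (∑ x ∈ Finset.univ.filter (fun x : ∀ j, Xc j => x i ∈ Si'), p x))) :=
          Finset.sum_le_sum fun x _ => mul_le_mul_of_nonneg_left (hμbd x) (hp x)
      _ = _ := by rw [← Finset.sum_mul]; ring
  -- combine via min
  rcases min_cases (c i + Real.log (1 + qi * Real.exp ε - qi)) ε with ⟨hmin, -⟩ | ⟨hmin, -⟩ <;>
    rw [hmin]
  · exact bound1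
  · exact bound2
end

section
/- Let u, l : Ω → ℝ≥0 be functions on a finite set Ω with 0 < l(ω) ≤ u(ω) and u(ω) ≤ e^{c} l(ω) for all ω, and suppose max_ω l(ω) ≤ e^{K} min_ω l(ω). Then for any two probability distributions P, Q on Ω with TV(P, Q) ≤ q, we have (Σ_ω u(ω) P(ω)) / (Σ_ω l(ω) Q(ω)) ≤ e^{c} (1 + q(e^{K} − 1)). -/
open Finset Real

/-- **Key technical inequality for CDP → BCDP.** Let `u, l : Ω → ℝ` on a finite
nonempty set with `0 < l ≤ u`, `u ≤ e^c · l` pointwise, and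
`max l ≤ e^K · min l`. Then for any two probability mass functions `P, Q` on `Ω`
with `TV(P,Q) ≤ q`, we have `(Σ u·P) / (Σ l·Q) ≤ e^c (1 + q(e^K − 1))`. -/
theorem ratio_bound_of_tv {Ω : Type*} [Fintype Ω] [Nonempty Ω]
    (u l P Q : Ω → ℝ) (c K q : ℝ)
    (hc : 0 ≤ c) (hK : 0 ≤ K) (hq0 : 0 ≤ q) (hq1 : q ≤ 1)
    (hl : ∀ ω, 0 < l ω) (hlu : ∀ ω, l ω ≤ u ω)
    (huc : ∀ ω, u ω ≤ Real.exp c * l ω)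
    (hmaxmin : (Finset.univ.sup' Finset.univ_nonempty l)
      ≤ Real.exp K * (Finset.univ.inf' Finset.univ_nonempty l))
    (hP : ∀ ω, 0 ≤ P ω) (hP1 : ∑ ω, P ω = 1)
    (hQ : ∀ ω, 0 ≤ Q ω) (hQ1 : ∑ ω, Q ω = 1)
    (hTV : (1 / 2) * ∑ ω, |P ω - Q ω| ≤ q) :
    (∑ ω, u ω * P ω) / (∑ ω, l ω * Q ω) ≤ Real.exp c * (1 + q * (Real.exp K - 1)) := by
  set m := Finset.univ.inf' Finset.univ_nonempty l with hm
  set M := Finset.univ.sup' Finset.univ_nonempty l with hM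
  have hml : ∀ ω, m ≤ l ω := fun ω => Finset.inf'_le _ (Finset.mem_univ ω)
  have hlM : ∀ ω, l ω ≤ M := fun ω => Finset.le_sup' _ (Finset.mem_univ ω)
  have hmpos : 0 < m := by
    rw [hm, Finset.lt_inf'_iff]
    exact fun ω _ => hl ω
  have hS : m ≤ ∑ ω, l ω * Q ω := by
    calc m = ∑ ω, m * Q ω := by rw [← Finset.mul_sum, hQ1, mul_one]
    _ ≤ ∑ ω, l ω * Q ω :=
      Finset.sum_le_sum fun ω _ => mul_le_mul_of_nonneg_right (hml ω) (hQ ω)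
  have hSpos : 0 < ∑ ω, l ω * Q ω := lt_of_lt_of_le hmpos hS
  have h0 : ∑ ω, (P ω - Q ω) = 0 := by
    rw [Finset.sum_sub_distrib, hP1, hQ1]; ring
  have hMm : m ≤ M := (hml (Classical.arbitrary Ω)).trans (hlM _)
  have hpt : ∀ ω, (l ω - m) * (P ω - Q ω)
      ≤ (M - m) * ((|P ω - Q ω| + (P ω - Q ω)) / 2) := by
    intro ω
    rcases le_or_gt (Q ω) (P ω) with h | h
    · rw [abs_of_nonneg (by linarith)]
      have h1 := hlM ω; have h2 := hml ω
      nlinarith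
    · rw [abs_of_neg (by linarith)]
      have h2 := hml ω
      nlinarith
  have hsum : ∑ ω, (l ω - m) * (P ω - Q ω)
      ≤ ∑ ω, (M - m) * ((|P ω - Q ω| + (P ω - Q ω)) / 2) :=
    Finset.sum_le_sum (fun ω _ => hpt ω)
  have e1 : ∑ ω, (l ω - m) * (P ω - Q ω)
      = ∑ ω, l ω * P ω - ∑ ω, l ω * Q ω := by
    have h : ∑ ω, (l ω - m) * (P ω - Q ω)
        = ∑ ω, (l ω * P ω - l ω * Q ω - m * (P ω - Q ω)) :=
      Finset.sum_congr rfl fun ω _ => by ring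
    rw [h, Finset.sum_sub_distrib, Finset.sum_sub_distrib, ← Finset.mul_sum, h0,
      mul_zero, sub_zero]
  have e2 : ∑ ω, (M - m) * ((|P ω - Q ω| + (P ω - Q ω)) / 2)
      = (M - m) * ((∑ ω, |P ω - Q ω|) / 2) := by
    rw [← Finset.mul_sum]
    congr 1
    rw [← Finset.sum_div, Finset.sum_add_distrib, h0, add_zero]
  rw [e1, e2] at hsum
  have htv2 : (∑ ω, |P ω - Q ω|) / 2 ≤ q := by linarith
  have key : ∑ ω, l ω * P ω ≤ ∑ ω, l ω * Q ω + (M - m) * q := by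
    have := mul_le_mul_of_nonneg_left htv2 (by linarith : (0:ℝ) ≤ M - m)
    linarith
  have hMK : M - m ≤ (Real.exp K - 1) * m := by
    have := hmaxmin
    nlinarith
  have hK1 : (1:ℝ) ≤ Real.exp K := Real.one_le_exp hK
  have key2 : ∑ ω, l ω * P ω ≤ (1 + q * (Real.exp K - 1)) * ∑ ω, l ω * Q ω := by
    have h1 : (M - m) * q ≤ q * (Real.exp K - 1) * m := by nlinarith
    have h2 : q * (Real.exp K - 1) * m ≤ q * (Real.exp K - 1) * ∑ ω, l ω * Q ω := by
      apply mul_le_mul_of_nonneg_left hS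
      have : 0 ≤ Real.exp K - 1 := by linarith
      positivity
    nlinarith
  have huP : ∑ ω, u ω * P ω ≤ Real.exp c * ∑ ω, l ω * P ω := by
    rw [Finset.mul_sum]
    exact Finset.sum_le_sum fun ω _ => by
      rw [← mul_assoc]
      exact mul_le_mul_of_nonneg_right (huc ω) (hP ω)
  rw [div_le_iff₀ hSpos]
  calc ∑ ω, u ω * P ω ≤ Real.exp c * ∑ ω, l ω * P ω := huP
  _ ≤ Real.exp c * ((1 + q * (Real.exp K - 1)) * ∑ ω, l ω * Q ω) :=
      mul_le_mul_of_nonneg_left key2 (Real.exp_pos c).le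
  _ = Real.exp c * (1 + q * (Real.exp K - 1)) * ∑ ω, l ω * Q ω := by ring
end

section
/- BCDP does not compose: there is a mechanism M on {0,1}^3 (uniform prior with independent Bernoulli(1/2) coordinates) that is 0-BCDP in coordinate 1, yet the mechanism consisting of two independent copies of M is not δ-BCDP in coordinate 1 for any finite δ. Specifically, M(x) outputs (x_1 ⊕ x_2, x_3) or (x_2, x_1 ⊕ x_3) each with probability 1/2; a single copy reveals nothing about x_1, but the pair of independent copies can have an output event whose conditional probability given x_1 = 1 is positive while given x_1 = 0 it differs by an unbounded ratio. -/
open Finset Real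

/-- The non-composition example mechanism on `{0,1}³`: output `(x₁ ⊕ x₂, x₃)` or
`(x₂, x₁ ⊕ x₃)` each with probability `1/2`. -/
noncomputable def ncMech : Bool × Bool × Bool → Bool × Bool → ℝ := fun x y =>
  (if y = (xor x.1 x.2.1, x.2.2) then 1 / 2 else 0) +
  (if y = (x.2.1, xor x.1 x.2.2) then 1 / 2 else 0)

/-- Two independent copies of `ncMech`. -/
noncomputable def ncMech2 : Bool × Bool × Bool → (Bool × Bool) × (Bool × Bool) → ℝ :=
  fun x y => ncMech x y.1 * ncMech x y.2

/-- The uniform prior on `{0,1}³` (i.i.d. Bernoulli(1/2) coordinates). -/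
noncomputable def ncPrior : Bool × Bool × Bool → ℝ := fun _ => 1 / 8

lemma key1 (a : Bool) (y : Bool × Bool) :
    ∑ x ∈ Finset.univ.filter (fun x : Bool × Bool × Bool => x.1 = a), ncMech x y = 1 := by
  cases a <;> rcases y with ⟨(_|_), (_|_)⟩ <;>
    simp [Finset.sum_filter, ncMech, Fintype.sum_prod_type] <;> norm_num

lemma scases (S : Finset Bool) : S = {false} ∨ S = {true} ∨ S = {false, true} ∨ S = ∅ := by
  revert S; decide

lemma keyS (S : Finset Bool) (y : Bool × Bool) :
    ∑ x ∈ Finset.univ.filter (fun x : Bool × Bool × Bool => x.1 ∈ S), ncMech x y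
      = S.card := by
  rcases scases S with h | h | h | h <;> subst h <;>
    simp only [Finset.mem_singleton, Finset.mem_insert, Finset.notMem_empty] <;>
    [skip; skip; skip; simp]
  · simpa using key1 false y
  · simpa using key1 true y
  · have : ∀ x : Bool × Bool × Bool, (x.1 = false ∨ x.1 = true) := by decide
    rw [Finset.filter_true_of_mem (fun x _ => this x)]
    rw [← Finset.sum_filter_add_sum_filter_not Finset.univ
      (fun x : Bool × Bool × Bool => x.1 = false)]
    have h2 : (Finset.univ.filter (fun x : Bool × Bool × Bool => ¬ x.1 = false))
        = Finset.univ.filter (fun x : Bool × Bool × Bool => x.1 = true) := by decide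
    rw [h2, key1, key1]
    norm_num

lemma cardF (S : Finset Bool) :
    (Finset.univ.filter (fun x : Bool × Bool × Bool => x.1 ∈ S)).card = 4 * S.card := by
  rcases scases S with h | h | h | h <;> subst h <;> decide

lemma ratio1 (R : Finset (Bool × Bool)) (S : Finset Bool) (hS : S.Nonempty) :
    (∑ x ∈ Finset.univ.filter (fun x : Bool × Bool × Bool => x.1 ∈ S),
        ncPrior x * ∑ y ∈ R, ncMech x y) /
      (∑ x ∈ Finset.univ.filter (fun x : Bool × Bool × Bool => x.1 ∈ S), ncPrior x)
    = R.card / 4 := by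
  have hnum : (∑ x ∈ Finset.univ.filter (fun x : Bool × Bool × Bool => x.1 ∈ S),
      ncPrior x * ∑ y ∈ R, ncMech x y) = S.card * R.card / 8 := by
    simp only [ncPrior, Finset.mul_sum]
    rw [Finset.sum_comm]
    have : ∀ y ∈ R, ∑ x ∈ Finset.univ.filter (fun x : Bool × Bool × Bool => x.1 ∈ S),
        (1:ℝ)/8 * ncMech x y = S.card / 8 := by
      intro y _
      rw [← Finset.mul_sum, keyS]
      ring
    rw [Finset.sum_congr rfl this]
    rw [Finset.sum_const, nsmul_eq_mul]
    ring
  have hden : (∑ x ∈ Finset.univ.filter (fun x : Bool × Bool × Bool => x.1 ∈ S),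
      ncPrior x) = 4 * S.card / 8 := by
    simp only [ncPrior, Finset.sum_const, nsmul_eq_mul, cardF]
    push_cast
    ring
  rw [hnum, hden]
  have hc : (S.card : ℝ) ≠ 0 := by
    exact_mod_cast Finset.card_ne_zero_of_mem hS.choose_spec
  field_simp

/-- **BCDP does not compose.** The mechanism `ncMech` under the uniform prior is
`0`-BCDP in coordinate 1, yet the two-copy mechanism `ncMech2` is not `δ`-BCDP in
coordinate 1 for any finite `δ`. -/
theorem bcdp_no_composition :
    (∀ (R : Finset (Bool × Bool)) (S S' : Finset Bool), S.Nonempty → S'.Nonempty →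
      (∑ x ∈ Finset.univ.filter (fun x : Bool × Bool × Bool => x.1 ∈ S),
          ncPrior x * ∑ y ∈ R, ncMech x y) /
        (∑ x ∈ Finset.univ.filter (fun x : Bool × Bool × Bool => x.1 ∈ S), ncPrior x)
      ≤ Real.exp 0 *
        ((∑ x ∈ Finset.univ.filter (fun x : Bool × Bool × Bool => x.1 ∈ S'),
            ncPrior x * ∑ y ∈ R, ncMech x y) /
          (∑ x ∈ Finset.univ.filter (fun x : Bool × Bool × Bool => x.1 ∈ S'), ncPrior x)))
    ∧
    (∀ δ : ℝ, ¬ (∀ (R : Finset ((Bool × Bool) × (Bool × Bool)))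
        (S S' : Finset Bool), S.Nonempty → S'.Nonempty →
      (∑ x ∈ Finset.univ.filter (fun x : Bool × Bool × Bool => x.1 ∈ S),
          ncPrior x * ∑ y ∈ R, ncMech2 x y) /
        (∑ x ∈ Finset.univ.filter (fun x : Bool × Bool × Bool => x.1 ∈ S), ncPrior x)
      ≤ Real.exp δ *
        ((∑ x ∈ Finset.univ.filter (fun x : Bool × Bool × Bool => x.1 ∈ S'),
            ncPrior x * ∑ y ∈ R, ncMech2 x y) /
          (∑ x ∈ Finset.univ.filter (fun x : Bool × Bool × Bool => x.1 ∈ S'), ncPrior x)))) := by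
  constructor
  · intro R S S' hS hS'
    rw [ratio1 R S hS, ratio1 R S' hS', Real.exp_zero, one_mul]
  · intro δ h
    have := h {((false, false), (true, true))} {true} {false}
      ⟨true, by simp⟩ ⟨false, by simp⟩
    simp only [Finset.mem_singleton, Finset.sum_singleton] at this
    rw [show (Finset.univ.filter (fun x : Bool × Bool × Bool => x.1 = true))
        = ({(true, false, false), (true, false, true), (true, true, false),
            (true, true, true)} : Finset _) from by decide,
      show (Finset.univ.filter (fun x : Bool × Bool × Bool => x.1 = false))
        = ({(false, false, false), (false, false, true), (false, true, false),
            (false, true, true)} : Finset _) from by decide] at this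
    norm_num [ncMech2, ncMech, ncPrior] at this
end

section
/- If the matrix condition A_δ c ≤ 1 holds, where A_δ[i,i] = 1/δ_i and A_δ[i,j] = 1/log(1 + (e^{δ_i}−1)/q_i) for j ≠ i, and c ∈ ℝ^d_{≥0}, then for every i, δ_i ≥ c_i + log(1 + q_i e^{Σ_{j≠i} c_j} − q_i). -/
open Finset Real

/-- **Linear constraint implies the CDP-to-BCDP budget constraint.** If
`A_δ c ≤ 1` componentwise, where `A_δ[i,i] = 1/δᵢ` and
`A_δ[i,j] = 1/log(1 + (e^{δᵢ}−1)/qᵢ)` for `j ≠ i`, then for every `i`,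
`δᵢ ≥ cᵢ + log(1 + qᵢ e^{Σ_{j≠i} cⱼ} − qᵢ)`. -/
theorem linear_constraint_implies_bcdp_budget {d : ℕ}
    (δ q c : Fin d → ℝ)
    (hδ : ∀ i, 0 < δ i) (hq0 : ∀ i, 0 < q i) (hq1 : ∀ i, q i ≤ 1)
    (hc : ∀ i, 0 ≤ c i)
    (hA : ∀ i, c i / δ i +
      (∑ j ∈ Finset.univ.erase i, c j) / Real.log (1 + (Real.exp (δ i) - 1) / q i) ≤ 1) :
    ∀ i, c i + Real.log (1 + q i * Real.exp (∑ j ∈ Finset.univ.erase i, c j) - q i) ≤ δ i := by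
  intro i
  have hD0 : 0 < δ i := hδ i
  have hQ0 : 0 < q i := hq0 i
  have hQ1 : q i ≤ 1 := hq1 i
  have hC0 : 0 ≤ c i := hc i
  have hS0 : 0 ≤ ∑ j ∈ Finset.univ.erase i, c j := Finset.sum_nonneg fun j _ => hc j
  have hkey := hA i
  set D := δ i with hD
  set Q := q i with hQ
  set C := c i with hC
  set S := ∑ j ∈ Finset.univ.erase i, c j with hS
  clear_value D Q C S
  set A : ℝ := 1 + (Real.exp D - 1) / Q with hA'
  set g0 : ℝ := Real.log A with hg0
  clear_value A g0
  have heD : 1 < Real.exp D := by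
    rw [show (1:ℝ) = Real.exp 0 by simp]; exact Real.exp_lt_exp.2 hD0
  have hA1 : Real.exp D ≤ A := by
    have h1 : Real.exp D - 1 ≤ (Real.exp D - 1) / Q := by
      rw [le_div_iff₀ hQ0]; nlinarith
    linarith
  have hApos : 0 < A := by linarith
  have hg0D : D ≤ g0 := by
    calc D = Real.log (Real.exp D) := (Real.log_exp D).symm
    _ ≤ g0 := hg0 ▸ Real.log_le_log (by positivity) hA1
  have hg0pos : 0 < g0 := lt_of_lt_of_le hD0 hg0D
  -- C ≤ D
  have hCD : C ≤ D := by
    have h1 : 0 ≤ S / g0 := div_nonneg hS0 hg0pos.le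
    have h2 : C / D ≤ 1 := by linarith
    rw [div_le_one hD0] at h2; exact h2
  set s : ℝ := 1 - C / D with hs
  clear_value s
  have hs0 : 0 ≤ s := by
    have : C / D ≤ 1 := (div_le_one hD0).2 hCD
    linarith
  have hs1 : s ≤ 1 := by
    have : 0 ≤ C / D := div_nonneg hC0 hD0.le
    linarith
  have hSg : S ≤ s * g0 := by
    have h3 : S / g0 ≤ s := by linarith
    calc S = S / g0 * g0 := by field_simp
    _ ≤ s * g0 := by nlinarith
  -- exp S ≤ A ^ s
  have hexpS : Real.exp S ≤ A ^ s := by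
    rw [Real.rpow_def_of_pos hApos, ← hg0]
    exact Real.exp_le_exp.2 (by linarith [hSg])
  -- concavity of rpow
  have hconc := (Real.concaveOn_rpow hs0 hs1).2 (Set.mem_Ici.2 hApos.le)
    (Set.mem_Ici.2 (zero_le_one (α := ℝ))) hQ0.le (by linarith : (0:ℝ) ≤ 1 - Q)
    (by ring)
  simp only [smul_eq_mul, Real.one_rpow] at hconc
  have hQA : Q * A + (1 - Q) * 1 = Real.exp D := by
    rw [hA']; field_simp; ring
  rw [hQA] at hconc
  have hDs : (Real.exp D) ^ s = Real.exp (s * D) := by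
    rw [← Real.exp_mul, mul_comm]
  rw [hDs] at hconc
  have hmain : 1 + Q * Real.exp S - Q ≤ Real.exp (s * D) := by
    have : Q * Real.exp S ≤ Q * A ^ s := by nlinarith
    nlinarith
  have hpos : 0 < 1 + Q * Real.exp S - Q := by
    have : 1 ≤ Real.exp S := by
      rw [show (1:ℝ) = Real.exp 0 by simp]; exact Real.exp_le_exp.2 hS0
    nlinarith
  have hlog : Real.log (1 + Q * Real.exp S - Q) ≤ s * D := by
    calc Real.log (1 + Q * Real.exp S - Q) ≤ Real.log (Real.exp (s * D)) :=
      Real.log_le_log hpos hmain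
    _ = s * D := Real.log_exp _
  have hsD : s * D = D - C := by
    rw [hs]; field_simp
  linarith [hlog, hsD ▸ hlog]
end

section
/- The function g(x) = log(1 + (e^{δ−x} − 1)/q) is concave on [0, δ] for any δ > 0 and q ∈ (0, 1], and consequently g(x) ≥ (1 − x/δ) · log(1 + (e^δ − 1)/q) for all x ∈ [0, δ]. -/
open Real

/-- **Concavity of the budget-tradeoff function.** For `δ > 0` and `q ∈ (0,1]`,
`g(x) = log(1 + (e^{δ−x} − 1)/q)` is concave on `[0, δ]`, and consequently
`g(x) ≥ (1 − x/δ) · log(1 + (e^δ − 1)/q)` for all `x ∈ [0, δ]`. -/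
theorem budget_function_concave (δ q : ℝ) (hδ : 0 < δ) (hq0 : 0 < q) (hq1 : q ≤ 1) :
    ConcaveOn ℝ (Set.Icc 0 δ) (fun x => Real.log (1 + (Real.exp (δ - x) - 1) / q)) ∧
    ∀ x ∈ Set.Icc 0 δ,
      (1 - x / δ) * Real.log (1 + (Real.exp δ - 1) / q)
        ≤ Real.log (1 + (Real.exp (δ - x) - 1) / q) := by
  have hqne : q ≠ 0 := ne_of_gt hq0
  -- positivity of the inner expression on [0, δ]
  have hupos : ∀ x : ℝ, x ≤ δ → 0 < Real.exp (δ - x) + q - 1 := by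
    intro x hx
    have h1 : (1:ℝ) ≤ Real.exp (δ - x) := Real.one_le_exp (by linarith)
    linarith
  have hvpos : ∀ x : ℝ, x ≤ δ → 0 < 1 + (Real.exp (δ - x) - 1) / q := by
    intro x hx
    have h1 : (1:ℝ) ≤ Real.exp (δ - x) := Real.one_le_exp (by linarith)
    have h2 : 0 ≤ (Real.exp (δ - x) - 1) / q := div_nonneg (by linarith) hq0.le
    linarith
  -- derivative helpers
  have hde : ∀ x : ℝ, HasDerivAt (fun y => Real.exp (δ - y)) (-Real.exp (δ - x)) x := by
    intro x
    have h1 : HasDerivAt (fun y : ℝ => δ - y) (-1) x := by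
      simpa using (hasDerivAt_id x).const_sub δ
    simpa [mul_comm, Function.comp_def] using (Real.hasDerivAt_exp (δ - x)).comp x h1
  have hconc : ConcaveOn ℝ (Set.Icc 0 δ)
      (fun x => Real.log (1 + (Real.exp (δ - x) - 1) / q)) := by
    apply concaveOn_of_hasDerivWithinAt2_nonpos (f' := fun x =>
        -Real.exp (δ - x) / (Real.exp (δ - x) + q - 1))
      (f'' := fun x => (q - 1) * Real.exp (δ - x) / (Real.exp (δ - x) + q - 1) ^ 2)
      (convex_Icc 0 δ)
    · -- continuity
      apply ContinuousOn.log
      · fun_prop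
      · intro x hx
        exact ne_of_gt (hvpos x hx.2)
    · -- first derivative
      rw [interior_Icc]
      intro x hx
      have hu := hupos x hx.2.le
      have hv := hvpos x hx.2.le
      have hd1 : HasDerivAt (fun y => 1 + (Real.exp (δ - y) - 1) / q)
          (-Real.exp (δ - x) / q) x := by
        simpa [div_eq_mul_inv] using
          (((hde x).sub_const 1).div_const q).const_add 1
      have hd2 : HasDerivAt (fun y => Real.log (1 + (Real.exp (δ - y) - 1) / q))
          ((1 + (Real.exp (δ - x) - 1) / q)⁻¹ * (-Real.exp (δ - x) / q)) x := by
        simpa [Function.comp_def] using (Real.hasDerivAt_log (ne_of_gt hv)).comp x hd1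
      have heq : (1 + (Real.exp (δ - x) - 1) / q)⁻¹ * (-Real.exp (δ - x) / q)
          = -Real.exp (δ - x) / (Real.exp (δ - x) + q - 1) := by
        have hveq : 1 + (Real.exp (δ - x) - 1) / q = (Real.exp (δ - x) + q - 1) / q := by
          field_simp; ring
        rw [hveq]
        rw [inv_div]
        field_simp
      rw [heq] at hd2
      exact hd2.hasDerivWithinAt
    · -- second derivative
      rw [interior_Icc]
      intro x hx
      have hu := hupos x hx.2.le
      have hune : Real.exp (δ - x) + q - 1 ≠ 0 := ne_of_gt hu
      have hdu : HasDerivAt (fun y => Real.exp (δ - y) + q - 1) (-Real.exp (δ - x)) x := by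
        simpa using ((hde x).add_const q).sub_const 1
      have hd : HasDerivAt (fun y => -Real.exp (δ - y) / (Real.exp (δ - y) + q - 1))
          ((-(-Real.exp (δ - x)) * (Real.exp (δ - x) + q - 1) -
            (-Real.exp (δ - x)) * (-Real.exp (δ - x))) /
            (Real.exp (δ - x) + q - 1) ^ 2) x :=
        ((hde x).neg).div hdu hune
      have heq : (-(-Real.exp (δ - x)) * (Real.exp (δ - x) + q - 1) -
            (-Real.exp (δ - x)) * (-Real.exp (δ - x))) /
            (Real.exp (δ - x) + q - 1) ^ 2
          = (q - 1) * Real.exp (δ - x) / (Real.exp (δ - x) + q - 1) ^ 2 := by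
        ring
      rw [heq] at hd
      exact hd.hasDerivWithinAt
    · -- nonpositivity of f''
      rw [interior_Icc]
      intro x hx
      have hu := hupos x hx.2.le
      apply div_nonpos_of_nonpos_of_nonneg
      · have := Real.exp_pos (δ - x)
        nlinarith
      · positivity
  refine ⟨hconc, fun x hx => ?_⟩
  have hδne : δ ≠ 0 := ne_of_gt hδ
  have ha : 0 ≤ 1 - x / δ := by
    rw [sub_nonneg, div_le_one hδ]; exact hx.2
  have hb : 0 ≤ x / δ := div_nonneg hx.1 hδ.le
  have hab : (1 - x / δ) + x / δ = 1 := by ring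
  have h0 : (0:ℝ) ∈ Set.Icc 0 δ := ⟨le_refl 0, hδ.le⟩
  have hδmem : δ ∈ Set.Icc 0 δ := ⟨hδ.le, le_refl δ⟩
  have := hconc.2 h0 hδmem ha hb hab
  have hcomb : (1 - x / δ) • (0:ℝ) + (x / δ) • δ = x := by
    simp only [smul_eq_mul]
    field_simp
    ring
  rw [hcomb] at this
  have hval0 : Real.log (1 + (Real.exp (δ - 0) - 1) / q)
      = Real.log (1 + (Real.exp δ - 1) / q) := by norm_num
  have hvalδ : Real.log (1 + (Real.exp (δ - δ) - 1) / q) = 0 := by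
    simp [Real.exp_zero]
  simp only [smul_eq_mul] at this
  rw [hval0, hvalδ] at this
  linarith [this]
end

section
/- If the pair (π, M) is ε-BDP, then for disjoint input events S, S' of positive prior probability and any output event R of positive probability, the odds ratio [P(x ∈ S | M(x) ∈ R) / P(x ∈ S' | M(x) ∈ R)] / [π(S)/π(S')] lies in the interval [e^{−ε}, e^{ε}]. -/
open Finset Real

/-- **BDP bounds the odds ratio.** If `(p, μ)` is `ε`-BDP, then for disjoint input
events `S, S'` of positive prior probability and any output event `R` of positive
probability, the ratio of posterior odds to prior odds lies in `[e^{−ε}, e^{ε}]`. -/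
theorem bdp_odds_ratio {X Y : Type*} [Fintype X] [Fintype Y]
    (p : X → ℝ) (μ : X → Y → ℝ) (ε : ℝ)
    (hp : ∀ x, 0 ≤ p x) (hp1 : ∑ x, p x = 1)
    (hμ : ∀ x y, 0 ≤ μ x y) (hμ1 : ∀ x, ∑ y, μ x y = 1)
    (hBDP : ∀ (S S' : Finset X) (R : Finset Y),
      0 < ∑ x ∈ S, p x → 0 < ∑ x ∈ S', p x →
      (∑ x ∈ S, p x * ∑ y ∈ R, μ x y) / (∑ x ∈ S, p x)
        ≤ Real.exp ε * ((∑ x ∈ S', p x * ∑ y ∈ R, μ x y) / (∑ x ∈ S', p x)))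
    (S S' : Finset X) (R : Finset Y)
    (hdisj : Disjoint S S')
    (hS : 0 < ∑ x ∈ S, p x) (hS' : 0 < ∑ x ∈ S', p x)
    (hR : 0 < ∑ x, p x * ∑ y ∈ R, μ x y) :
    Real.exp (-ε) ≤
      (((∑ x ∈ S, p x * ∑ y ∈ R, μ x y) / (∑ x, p x * ∑ y ∈ R, μ x y)) /
        ((∑ x ∈ S', p x * ∑ y ∈ R, μ x y) / (∑ x, p x * ∑ y ∈ R, μ x y))) /
      ((∑ x ∈ S, p x) / (∑ x ∈ S', p x)) ∧
    (((∑ x ∈ S, p x * ∑ y ∈ R, μ x y) / (∑ x, p x * ∑ y ∈ R, μ x y)) /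
        ((∑ x ∈ S', p x * ∑ y ∈ R, μ x y) / (∑ x, p x * ∑ y ∈ R, μ x y))) /
      ((∑ x ∈ S, p x) / (∑ x ∈ S', p x)) ≤ Real.exp ε := by
  set A := ∑ x ∈ S, p x * ∑ y ∈ R, μ x y with hA
  set B := ∑ x ∈ S', p x * ∑ y ∈ R, μ x y with hB
  set a := ∑ x ∈ S, p x with ha
  set b := ∑ x ∈ S', p x with hb
  set T := ∑ x, p x * ∑ y ∈ R, μ x y with hT
  have hAnn : 0 ≤ A := Finset.sum_nonneg fun x _ =>
    mul_nonneg (hp x) (Finset.sum_nonneg fun y _ => hμ x y)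
  have hBnn : 0 ≤ B := Finset.sum_nonneg fun x _ =>
    mul_nonneg (hp x) (Finset.sum_nonneg fun y _ => hμ x y)
  have huniv : (0:ℝ) < ∑ x, p x := by rw [hp1]; norm_num
  -- B > 0
  have hBpos : 0 < B := by
    rcases hBnn.lt_or_eq with h | h
    · exact h
    · exfalso
      have := hBDP Finset.univ S' R huniv hS'
      rw [hp1, ← hT, ← hB, ← h] at this
      simp at this
      linarith
  have hApos : 0 < A := by
    rcases hAnn.lt_or_eq with h | h
    · exact h
    · exfalso
      have := hBDP Finset.univ S R huniv hS
      rw [hp1, ← hT, ← hA, ← h] at this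
      simp at this
      linarith
  have key : ((A / T) / (B / T)) / (a / b) = (A / a) / (B / b) := by
    field_simp
  rw [key]
  have h1 := hBDP S S' R hS hS'
  have h2 := hBDP S' S R hS' hS
  have hBb : 0 < B / b := div_pos hBpos hS'
  have hAa : 0 < A / a := div_pos hApos hS
  constructor
  · rw [Real.exp_neg, le_div_iff₀ hBb, inv_mul_le_iff₀ (Real.exp_pos ε)]
    exact h2
  · rw [div_le_iff₀ hBb]
    calc A / a ≤ Real.exp ε * (B / b) := h1
    _ = Real.exp ε * (B / b) := rfl
end

section
/- In the mean estimation mechanism with parameters c_0 = 0, c_d = min{log((e^{ζδ̃_1} + q − 1)/q), δ̃_d}, and c_i = c_d if c_d ≤ δ̃_i, else c_i = δ̃_i − log(1 + q e^{c_d} − q) (for i < d), where δ̃_i = min{δ_i, ε}, ζ ∈ (0,1], q ∈ (0,1], and 0 < δ̃_1 ≤ … ≤ δ̃_d ≤ ε: the resulting sequence satisfies 0 ≤ c_1 ≤ c_2 ≤ … ≤ c_d, and for each i, c_i + log(1 + q e^{c_d} − q) ≤ δ̃_i whenever c_d > δ̃_i. -/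
open Real

/-- **Validity of the privacy-budget allocation in the mean-estimation mechanism.**
With `δ̃ᵢ = min(δᵢ, ε)`, `c_d = min{log((e^{ζδ̃₁} + q − 1)/q), δ̃_d}`, and
`cᵢ = c_d` if `c_d ≤ δ̃ᵢ`, else `cᵢ = δ̃ᵢ − log(1 + q e^{c_d} − q)`, the resulting
sequence satisfies `0 ≤ c₁ ≤ … ≤ c_d`, and `cᵢ + log(1 + q e^{c_d} − q) ≤ δ̃ᵢ`
whenever `c_d > δ̃ᵢ`. -/
theorem mean_estimation_budget_valid (d : ℕ) (hd : 0 < d)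
    (δ : Fin d → ℝ) (ε ζ q : ℝ)
    (hδpos : ∀ i, 0 < δ i) (hδmono : Monotone δ)
    (hε : 0 < ε) (hζ0 : 0 < ζ) (hζ1 : ζ ≤ 1) (hq0 : 0 < q) (hq1 : q ≤ 1)
    (δt : Fin d → ℝ) (hδt : δt = fun i => min (δ i) ε)
    (cd : ℝ)
    (hcd : cd = min (Real.log ((Real.exp (ζ * δt ⟨0, hd⟩) + q - 1) / q))
      (δt ⟨d - 1, Nat.sub_lt hd Nat.one_pos⟩))
    (c : Fin d → ℝ)
    (hc : c = fun i =>
      if cd ≤ δt i then cd else δt i - Real.log (1 + q * Real.exp cd - q)) :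
    (∀ i, 0 ≤ c i) ∧ Monotone c ∧
    (∀ i, δt i < cd → c i + Real.log (1 + q * Real.exp cd - q) ≤ δt i) := by
  have hδtpos : ∀ i, 0 < δt i := by
    intro i; rw [hδt]; exact lt_min (hδpos i) hε
  have hδtmono : Monotone δt := by
    rw [hδt]; intro i j hij; exact min_le_min (hδmono hij) le_rfl
  have h0le : ∀ i, δt ⟨0, hd⟩ ≤ δt i := fun i => hδtmono (Fin.mk_le_of_le_val (Nat.zero_le _))
  have hexp1 : (1:ℝ) ≤ Real.exp (ζ * δt ⟨0, hd⟩) := by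
    apply Real.one_le_exp
    exact mul_nonneg hζ0.le (hδtpos _).le
  have harg1 : (1:ℝ) ≤ (Real.exp (ζ * δt ⟨0, hd⟩) + q - 1) / q := by
    rw [le_div_iff₀ hq0]; linarith
  have hcd0 : 0 ≤ cd := by
    rw [hcd]
    exact le_min (Real.log_nonneg harg1) (hδtpos _).le
  have hA1 : (1:ℝ) ≤ 1 + q * Real.exp cd - q := by
    nlinarith [Real.one_le_exp hcd0]
  have hM0 : 0 ≤ Real.log (1 + q * Real.exp cd - q) := Real.log_nonneg hA1
  have hMle : Real.log (1 + q * Real.exp cd - q) ≤ ζ * δt ⟨0, hd⟩ := by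
    have hcdL : cd ≤ Real.log ((Real.exp (ζ * δt ⟨0, hd⟩) + q - 1) / q) := by
      rw [hcd]; exact min_le_left _ _
    have hecd : Real.exp cd ≤ (Real.exp (ζ * δt ⟨0, hd⟩) + q - 1) / q := by
      calc Real.exp cd ≤ Real.exp (Real.log ((Real.exp (ζ * δt ⟨0, hd⟩) + q - 1) / q)) :=
            Real.exp_le_exp.mpr hcdL
        _ = _ := Real.exp_log (lt_of_lt_of_le one_pos harg1)
    have : 1 + q * Real.exp cd - q ≤ Real.exp (ζ * δt ⟨0, hd⟩) := by
      have := (le_div_iff₀ hq0).mp hecd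
      nlinarith
    calc Real.log (1 + q * Real.exp cd - q) ≤ Real.log (Real.exp (ζ * δt ⟨0, hd⟩)) :=
          Real.log_le_log (by linarith) this
      _ = ζ * δt ⟨0, hd⟩ := Real.log_exp _
  have hMδ : ∀ i, Real.log (1 + q * Real.exp cd - q) ≤ δt i := by
    intro i
    have h1 : ζ * δt ⟨0, hd⟩ ≤ δt ⟨0, hd⟩ := by
      nlinarith [hδtpos ⟨0, hd⟩]
    exact hMle.trans (h1.trans (h0le i))
  refine ⟨?_, ?_, ?_⟩
  · intro i
    rw [hc]
    by_cases h : cd ≤ δt i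
    · simpa [h] using hcd0
    · simp only [h, if_false]
      push_neg at h
      have := hMδ i
      linarith
  · intro i j hij
    rw [hc]
    have hδij : δt i ≤ δt j := hδtmono hij
    by_cases hi : cd ≤ δt i
    · have hj : cd ≤ δt j := hi.trans hδij
      simp [hi, hj]
    · push_neg at hi
      by_cases hj : cd ≤ δt j
      · simp only [not_le.mpr hi, if_false, hj, if_true]
        linarith
      · simp only [not_le.mpr hi, hj, if_false]
        linarith
  · intro i hi
    rw [hc]
    simp only [not_le.mpr hi, if_false]
    linarith
end
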